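/- Probability-1 regret guarantee for Hedge: Let K ≥ 2, T ≥ 1 with T > 2·ln K, and set ε = √(ln K / (2T)) (so ε ∈ (0,1/2)). Let c_1,...,c_T ∈ [0,1]^K be arbitrary cost vectors. Define weights w_1(a) = 1 and w_{t+1}(a) = w_t(a)·(1−ε)^{c_t(a)} for all arms a ∈ [K], W_t = Σ_{a∈[K]} w_t(a), and distributions p_t(a) = w_t(a)/W_t. Then Σ_{t=1}^T Σ_{a∈[K]} p_t(a)·c_t(a) − min_{a∈[K]} Σ_{t=1}^T c_t(a) < 2·√(2T·ln K). -/

import Mathlib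

lemma rpow_le_one_sub_mul {a x : ℝ} (ha : 0 < a) (hx : 0 ≤ x) (hx1 : x ≤ 1) :
    a ^ x ≤ 1 - (1 - a) * x := by
  have h := convexOn_exp.2 (Set.mem_univ (Real.log a)) (Set.mem_univ 0)
    hx (show (0:ℝ) ≤ 1 - x by linarith) (by ring)
  simp only [smul_eq_mul, mul_zero, add_zero, Real.exp_zero, Real.exp_log ha] at h
  rw [Real.rpow_def_of_pos ha, mul_comm]
  linarith

lemma neg_log_le {ε : ℝ} (h1 : ε < 1) : -Real.log (1 - ε) ≤ ε / (1 - ε) := by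
  have hpos : 0 < 1 - ε := by linarith
  have h := Real.log_le_sub_one_of_pos (x := (1 - ε)⁻¹) (by positivity)
  rw [Real.log_inv] at h
  have : (1 - ε)⁻¹ - 1 = ε / (1 - ε) := by field_simp; ring
  linarith

/-- **Probability-1 regret guarantee for Hedge.**
Let `K ≥ 2`, `T ≥ 1` with `T > 2 ln K`, and `ε = √(ln K / (2T))`. For arbitrary cost
vectors `c t ∈ [0,1]^K`, the Hedge weights are `w 0 a = 1` and
`w (t+1) a = w t a · (1-ε)^(c t a)`, with played distributions `p t a = w t a / ∑ a', w t a'`.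
Then `∑_t ∑_a p t a · c t a − min_a ∑_t c t a < 2√(2 T ln K)`. -/
theorem hedge_probability_one_regret (K T : ℕ) (hK : 2 ≤ K) (hT : 1 ≤ T)
    (hTK : 2 * Real.log K < T)
    (ε : ℝ) (hε : ε = Real.sqrt (Real.log K / (2 * T)))
    (c : Fin T → Fin K → ℝ) (hc : ∀ t a, c t a ∈ Set.Icc (0 : ℝ) 1)
    (w : ℕ → Fin K → ℝ)
    (hw0 : ∀ a, w 0 a = 1)
    (hw : ∀ (t : Fin T) (a : Fin K), w (t.1 + 1) a = w t.1 a * (1 - ε) ^ (c t a))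
    (p : Fin T → Fin K → ℝ)
    (hp : ∀ (t : Fin T) (a : Fin K), p t a = w t.1 a / ∑ a', w t.1 a') :
    (∑ t : Fin T, ∑ a : Fin K, p t a * c t a)
      - (Finset.univ.inf' ⟨⟨0, by omega⟩, Finset.mem_univ _⟩
          (fun a : Fin K => ∑ t : Fin T, c t a))
      < 2 * Real.sqrt (2 * T * Real.log K) := by
  have hK1 : (1:ℝ) < K := by exact_mod_cast hK.trans_lt' one_lt_two
  have hlogK : 0 < Real.log K := Real.log_pos hK1
  have hTpos : (0:ℝ) < T := by exact_mod_cast hT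
  have hε2 : ε ^ 2 = Real.log K / (2 * T) := by
    rw [hε, Real.sq_sqrt (by positivity)]
  have hεpos : 0 < ε := by
    rw [hε]; exact Real.sqrt_pos.mpr (by positivity)
  have hεhalf : ε < 1 / 2 := by
    have h14 : ε ^ 2 < 1 / 4 := by
      rw [hε2, div_lt_iff₀ (by positivity)]; nlinarith
    nlinarith [sq_nonneg (ε - 1/2)]
  have h1εpos : 0 < 1 - ε := by linarith
  have hlogKε : Real.log K = 2 * T * ε ^ 2 := by
    rw [hε2]; field_simp
  -- positivity of weights
  have hwpos : ∀ n, n ≤ T → ∀ a, 0 < w n a := by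
    intro n
    induction n with
    | zero => intro _ a; rw [hw0]; norm_num
    | succ m ih =>
      intro hm a
      rw [hw ⟨m, by omega⟩ a]
      exact mul_pos (ih (by omega) a) (Real.rpow_pos_of_pos h1εpos _)
  have hWpos : ∀ n, n ≤ T → 0 < ∑ a, w n a :=
    fun n hn => Finset.sum_pos (fun a _ => hwpos n hn a) ⟨⟨0, by omega⟩, Finset.mem_univ _⟩
  -- per-round expected cost bounds
  have hFnonneg : ∀ t : Fin T, 0 ≤ ∑ a, p t a * c t a := by
    intro t
    refine Finset.sum_nonneg fun a _ => mul_nonneg ?_ (hc t a).1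
    rw [hp]
    exact div_nonneg (hwpos t.1 t.2.le a).le (hWpos t.1 t.2.le).le
  have hpsum : ∀ t : Fin T, ∑ a, p t a = 1 := by
    intro t
    simp only [hp]
    rw [← Finset.sum_div, div_self (hWpos t.1 t.2.le).ne']
  have hFle1 : ∀ t : Fin T, ∑ a, p t a * c t a ≤ 1 := by
    intro t
    calc ∑ a, p t a * c t a ≤ ∑ a, p t a := by
          refine Finset.sum_le_sum fun a _ => ?_
          have hpa : 0 ≤ p t a := by
            rw [hp]; exact div_nonneg (hwpos t.1 t.2.le a).le (hWpos t.1 t.2.le).le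
          nlinarith [(hc t a).2]
      _ = 1 := hpsum t
  -- one-step recursion on log of total weight
  have hstep : ∀ t : Fin T,
      Real.log (∑ a, w (t.1 + 1) a) ≤ Real.log (∑ a, w t.1 a) - ε * ∑ a, p t a * c t a := by
    intro t
    set F := ∑ a, p t a * c t a with hF
    have hW := hWpos t.1 t.2.le
    have h1F : 0 < 1 - ε * F := by nlinarith [hFle1 t, hFnonneg t]
    have hle : ∑ a, w (t.1 + 1) a ≤ (∑ a, w t.1 a) * (1 - ε * F) := by
      have h1 : ∑ a, w (t.1 + 1) a ≤ ∑ a, w t.1 a * (1 - ε * c t a) := by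
        refine Finset.sum_le_sum fun a _ => ?_
        rw [hw t a]
        refine mul_le_mul_of_nonneg_left ?_ (hwpos t.1 t.2.le a).le
        have := rpow_le_one_sub_mul (a := 1 - ε) (x := c t a) h1εpos (hc t a).1 (hc t a).2
        linarith [this, show (1 - (1 - ε)) * c t a = ε * c t a by ring]
      have hWF : (∑ a, w t.1 a) * F = ∑ a, w t.1 a * c t a := by
        rw [hF, Finset.mul_sum]
        refine Finset.sum_congr rfl fun a _ => ?_
        rw [hp]
        field_simp
      have h2 : ∑ a, w t.1 a * (1 - ε * c t a) = (∑ a, w t.1 a) * (1 - ε * F) := by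
        have e1 : ∑ a, w t.1 a * (1 - ε * c t a)
            = (∑ a, w t.1 a) - ε * ∑ a, w t.1 a * c t a := by
          rw [Finset.mul_sum, ← Finset.sum_sub_distrib]
          exact Finset.sum_congr rfl fun a _ => by ring
        rw [e1, ← hWF]
        ring
      linarith
    have hpos' : 0 < ∑ a, w (t.1 + 1) a := hWpos _ (by omega)
    calc Real.log (∑ a, w (t.1 + 1) a)
        ≤ Real.log ((∑ a, w t.1 a) * (1 - ε * F)) := Real.log_le_log hpos' hle
      _ = Real.log (∑ a, w t.1 a) + Real.log (1 - ε * F) := Real.log_mul hW.ne' h1F.ne'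
      _ ≤ Real.log (∑ a, w t.1 a) - ε * F := by
          have := Real.log_le_sub_one_of_pos h1F
          linarith
  -- accumulate the recursion
  set G : ℕ → ℝ := fun s => if h : s < T then ∑ a, p ⟨s, h⟩ a * c ⟨s, h⟩ a else 0 with hG
  have hacc : ∀ n, n ≤ T →
      Real.log (∑ a, w n a) ≤ Real.log K - ε * ∑ s ∈ Finset.range n, G s := by
    intro n
    induction n with
    | zero =>
      intro _
      simp [hw0]
    | succ m ih =>
      intro hm
      have hmT : m < T := by omega
      have := hstep ⟨m, hmT⟩
      have hGm : G m = ∑ a, p ⟨m, hmT⟩ a * c ⟨m, hmT⟩ a := by simp [hG, hmT]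
      rw [Finset.sum_range_succ, hGm]
      have := ih (by omega)
      nlinarith [hstep ⟨m, hmT⟩]
  have hsumG : ∑ s ∈ Finset.range T, G s = ∑ t : Fin T, ∑ a, p t a * c t a := by
    rw [← Fin.sum_univ_eq_sum_range]
    exact Finset.sum_congr rfl fun t _ => by simp [hG, t.2]
  -- closed form for final weights
  have hwT : ∀ a, w T a = (1 - ε) ^ (∑ t : Fin T, c t a) := by
    intro a
    set c' : ℕ → ℝ := fun s => if h : s < T then c ⟨s, h⟩ a else 0 with hc'
    have key : ∀ n, n ≤ T → w n a = (1 - ε) ^ (∑ s ∈ Finset.range n, c' s) := by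
      intro n
      induction n with
      | zero => intro _; simp [hw0]
      | succ m ih =>
        intro hm
        have hmT : m < T := by omega
        rw [hw ⟨m, hmT⟩ a, ih (by omega), Finset.sum_range_succ, Real.rpow_add h1εpos]
        simp [hc', hmT]
    rw [key T le_rfl, ← Fin.sum_univ_eq_sum_range]
    congr 1
    exact Finset.sum_congr rfl fun t _ => by simp [hc', t.2]
  -- best arm
  obtain ⟨astar, -, hastar⟩ := Finset.exists_mem_eq_inf'
    (⟨⟨0, by omega⟩, Finset.mem_univ _⟩ : (Finset.univ : Finset (Fin K)).Nonempty)
    (fun a : Fin K => ∑ t : Fin T, c t a)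
  set m := ∑ t : Fin T, c t astar with hmdef
  have hm0 : 0 ≤ m := Finset.sum_nonneg fun t _ => (hc t astar).1
  have hmT : m ≤ T := by
    calc m ≤ ∑ _t : Fin T, (1:ℝ) := Finset.sum_le_sum fun t _ => (hc t astar).2
      _ = T := by simp
  -- lower bound on log of final total weight
  have hlower : m * Real.log (1 - ε) ≤ Real.log (∑ a, w T a) := by
    have h1 : w T astar ≤ ∑ a, w T a :=
      Finset.single_le_sum (fun a _ => (hwpos T le_rfl a).le) (Finset.mem_univ astar)
    have h2 : Real.log (w T astar) ≤ Real.log (∑ a, w T a) :=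
      Real.log_le_log (hwpos T le_rfl astar) h1
    rw [hwT astar, Real.log_rpow h1εpos] at h2
    exact h2
  -- combine
  set S := ∑ t : Fin T, ∑ a, p t a * c t a with hS
  have hmain : ε * S ≤ Real.log K - m * Real.log (1 - ε) := by
    have := hacc T le_rfl
    rw [hsumG] at this
    linarith
  have hnl : -Real.log (1 - ε) ≤ ε / (1 - ε) := neg_log_le (by linarith)
  have hmain2 : ε * S ≤ 2 * T * ε ^ 2 + m * (ε / (1 - ε)) := by
    have : m * (-Real.log (1 - ε)) ≤ m * (ε / (1 - ε)) :=
      mul_le_mul_of_nonneg_left hnl hm0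
    rw [hlogKε] at hmain
    linarith
  -- final arithmetic
  have hRHS : Real.sqrt (2 * T * Real.log K) = 2 * T * ε := by
    have : 2 * (T:ℝ) * Real.log K = (2 * T * ε) ^ 2 := by
      rw [hlogKε]; ring
    rw [this, Real.sqrt_sq (by positivity)]
  rw [hastar, hRHS]
  have hdiv : ε / (1 - ε) - ε = ε ^ 2 / (1 - ε) := by
    field_simp; ring
  have hx2 : ε ^ 2 / (1 - ε) < 2 * ε ^ 2 := by
    rw [div_lt_iff₀ h1εpos]; nlinarith
  have hfin : m * (ε / (1 - ε) - ε) < 2 * T * ε ^ 2 := by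
    rw [hdiv]
    calc m * (ε ^ 2 / (1 - ε)) ≤ T * (ε ^ 2 / (1 - ε)) :=
          mul_le_mul_of_nonneg_right hmT (by positivity)
      _ < T * (2 * ε ^ 2) := by
          exact mul_lt_mul_of_pos_left hx2 hTpos
      _ = 2 * T * ε ^ 2 := by ring
    -- done
  clear hstep hacc hwT hsumG hFnonneg hFle1 hpsum hwpos hWpos hlower hmain hw hp hc hw0
  have hmul : ε * (S - m) < ε * (2 * (2 * T * ε)) := by
    calc ε * (S - m) = ε * S - m * ε := by ring
      _ ≤ (2 * T * ε ^ 2 + m * (ε / (1 - ε))) - m * ε := by linarith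
      _ = 2 * T * ε ^ 2 + m * (ε / (1 - ε) - ε) := by ring
      _ < 2 * T * ε ^ 2 + 2 * T * ε ^ 2 := by linarith
      _ = ε * (2 * (2 * T * ε)) := by ring
  have := (mul_lt_mul_iff_right₀ hεpos).mp hmul
  linarith
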